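/- For every alphabet size σ ≥ 2 and every i ≥ 2, the number of unbordered strings of length i satisfies b(i, σ) ≥ σ^i − σ^{i−1} − σ^{i−2}. -/

import Mathlib

open List Finset Filter

/-- `S` is unbordered: it has no nonempty proper prefix that is also a suffix. -/
def Unbordered {α : Type*} (S : List α) : Prop :=
  ∀ B : List α, B ≠ [] → B.length < S.length → B <+: S → ¬ B <:+ S

/-- The length of the maximal unbordered factor of `S`. -/
noncomputable def muf {α : Type*} (S : List α) : ℕ :=
  sSup {k | ∃ F : List α, F <:+: S ∧ Unbordered F ∧ F.length = k}


/-- `unbCount σ i` : the number of unbordered strings of length `i` over an alphabet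
of size `σ`. -/
noncomputable def unbCount (σ i : ℕ) : ℕ :=
  Nat.card {f : Fin i → Fin σ // Unbordered (List.ofFn f)}

section Aux

variable {σ i : ℕ}

private def gf (hi : 0 < i) (f : Fin i → Fin σ) (n : ℕ) : Fin σ :=
  f ⟨n % i, Nat.mod_lt _ hi⟩

private lemma gf_eq (hi : 0 < i) (f : Fin i → Fin σ) {n : ℕ} (h : n < i) :
    gf hi f n = f ⟨n, h⟩ := by
  unfold gf
  congr 1
  exact Fin.ext (Nat.mod_eq_of_lt h)

private def Brd (hi : 0 < i) (f : Fin i → Fin σ) (k : ℕ) : Prop :=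
  ∀ j < k, gf hi f j = gf hi f (i - k + j)

private instance {hi : 0 < i} (f : Fin i → Fin σ) (k : ℕ) : Decidable (Brd hi f k) :=
  inferInstanceAs (Decidable (∀ j < k, gf hi f j = gf hi f (i - k + j)))

private def Emap {m k : ℕ} (hk : 2 ≤ k) (hkm : k ≤ m) (h : Fin (m - 1) → Fin σ) :
    Fin m → Fin σ := fun j =>
  if hj : j.val = 0 then h ⟨k - 2, by omega⟩ else h ⟨j.val - 1, by have := j.isLt; omega⟩

private lemma Emap_zero {m k : ℕ} (hk : 2 ≤ k) (hkm : k ≤ m) (h : Fin (m - 1) → Fin σ)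
    (h0 : 0 < m) : Emap hk hkm h ⟨0, h0⟩ = h ⟨k - 2, by omega⟩ := dif_pos rfl

private lemma Emap_ne {m k : ℕ} (hk : 2 ≤ k) (hkm : k ≤ m) (h : Fin (m - 1) → Fin σ)
    (j : Fin m) (hj : j.val ≠ 0) (hjj : j.val - 1 < m - 1) :
    Emap hk hkm h j = h ⟨j.val - 1, hjj⟩ := dif_neg hj

private lemma not_unbordered_iff (hi : 0 < i) (f : Fin i → Fin σ) :
    ¬ Unbordered (List.ofFn f) ↔ ∃ k, 1 ≤ k ∧ k < i ∧ Brd hi f k := by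
  constructor
  · intro h
    rw [Unbordered] at h
    push_neg at h
    obtain ⟨B, hne, hlen, hpre, hsuf⟩ := h
    have hBl : B.length < i := by simpa using hlen
    refine ⟨B.length, Nat.one_le_iff_ne_zero.2 (by simpa using hne), hBl, ?_⟩
    intro j hj
    have h1 := hpre.getElem (i := j) hj
    have h2 := hsuf.getElem (i := j) hj
    simp only [List.getElem_ofFn, List.length_ofFn] at h1 h2
    rw [gf_eq hi f (by omega), gf_eq hi f (show i - B.length + j < i by omega)]
    exact h1.symm.trans h2
  · rintro ⟨k, hk1, hki, hb⟩
    intro hU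
    have hlt : (List.ofFn f).take k = (List.ofFn f).drop (i - k) := by
      apply List.ext_getElem
      · simp; omega
      · intro n h₁ h₂
        simp only [List.getElem_take, List.getElem_drop, List.getElem_ofFn]
        have hn : n < k := by simp at h₁; omega
        have := hb n hn
        rw [gf_eq hi f (by omega), gf_eq hi f (show i - k + n < i by omega)] at this
        exact this
    exact hU ((List.ofFn f).take k)
      (by simp [← List.length_pos_iff_ne_nil]; omega)
      (by simp; omega)
      (List.take_prefix _ _)
      (hlt ▸ List.drop_suffix _ _)

private lemma brd_descent (hi : 0 < i) (f : Fin i → Fin σ) {k : ℕ} (hk : Brd hi f k)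
    (hki : k < i) (h2 : i < 2 * k) : Brd hi f (2 * k - i) := by
  intro j hj
  have e1 := hk j (by omega)
  have e2 := hk (i - k + j) (by omega)
  have e3 : i - (2 * k - i) + j = i - k + (i - k + j) := by omega
  rw [e3]
  exact e1.trans e2

private lemma exists_min_border (hi : 0 < i) (f : Fin i → Fin σ)
    (h : ¬ Unbordered (List.ofFn f))
    (hne : f ⟨0, hi⟩ ≠ f ⟨i - 1, by omega⟩) :
    ∃ k, 2 ≤ k ∧ 2 * k ≤ i ∧ Brd hi f k := by
  classical
  obtain ⟨k, hk1, hki, hb⟩ := (not_unbordered_iff hi f).1 h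
  have hex : ∃ n, 1 ≤ n ∧ n < i ∧ Brd hi f n := ⟨k, hk1, hki, hb⟩
  obtain ⟨h1, h2, h3⟩ := Nat.find_spec hex
  refine ⟨Nat.find hex, ?_, ?_, h3⟩
  · by_contra hlt
    have hone : Nat.find hex = 1 := by omega
    have hB := h3 0 (by omega)
    rw [hone] at hB
    rw [gf_eq hi f (by omega), gf_eq hi f (show i - 1 + 0 < i by omega)] at hB
    apply hne
    simpa using hB
  · by_contra hgt
    push_neg at hgt
    have hd := brd_descent hi f h3 h2 (by omega)
    exact Nat.find_min hex (m := 2 * Nat.find hex - i) (by omega) ⟨by omega, by omega, hd⟩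

private lemma card_B1 (hi2 : 2 ≤ i) :
    (univ.filter (fun f : Fin i → Fin σ =>
      f ⟨0, by omega⟩ = f ⟨i - 1, by omega⟩)).card ≤ σ ^ (i - 1) := by
  classical
  have hmain : (univ.filter (fun f : Fin i → Fin σ =>
      f ⟨0, by omega⟩ = f ⟨i - 1, by omega⟩)).card
      ≤ (univ : Finset (Fin (i - 1) → Fin σ)).card := by
    apply Finset.card_le_card_of_injOn
      (fun f : Fin i → Fin σ => f ∘ Fin.castLE (by omega : i - 1 ≤ i))
      (fun a _ => Finset.mem_univ _)
    intro f₁ hf₁ f₂ hf₂ hr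
    simp only [Finset.coe_filter, Set.mem_setOf_eq, Finset.mem_univ, true_and] at hf₁ hf₂
    funext j
    by_cases hj : j.val < i - 1
    · exact congrFun hr ⟨j.val, hj⟩
    · have hj' : j = ⟨i - 1, by omega⟩ := Fin.ext (show j.val = i - 1 by have := j.isLt; omega)
      have h0 : f₁ (⟨0, by omega⟩ : Fin i) = f₂ (⟨0, by omega⟩ : Fin i) :=
        congrFun hr ⟨0, by omega⟩
      rw [hj', ← hf₁, ← hf₂]
      exact h0
  simpa using hmain

private lemma card_ne_le {k : ℕ} (hk2 : 2 ≤ k) (hkm : k ≤ i) (h0 : 0 < i) (hk1 : k - 1 < i) :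
    (univ.filter (fun g : Fin i → Fin σ => ¬ g ⟨0, h0⟩ = g ⟨k - 1, hk1⟩)).card
      ≤ σ ^ i - σ ^ (i - 1) := by
  classical
  have hlow : σ ^ (i - 1) ≤
      (univ.filter (fun g : Fin i → Fin σ => g ⟨0, h0⟩ = g ⟨k - 1, hk1⟩)).card := by
    have hkne : k - 1 ≠ 0 := by omega
    have hkjj : k - 1 - 1 < i - 1 := by omega
    have hE : (univ : Finset (Fin (i - 1) → Fin σ)).card
        ≤ (univ.filter (fun g : Fin i → Fin σ =>
          g ⟨0, h0⟩ = g ⟨k - 1, hk1⟩)).card := by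
      apply Finset.card_le_card_of_injOn (Emap hk2 hkm)
      · intro h _
        refine Finset.mem_filter.2 ⟨Finset.mem_univ _, ?_⟩
        rw [Emap_zero hk2 hkm h h0, Emap_ne hk2 hkm h ⟨k - 1, hk1⟩ hkne hkjj]
        exact congrArg h (Fin.ext (show (k - 2 : ℕ) = k - 1 - 1 by omega))
      · intro h₁ _ h₂ _ hr
        funext t
        have htlt : t.val + 1 < i := by have := t.isLt; omega
        have htne : (t.val + 1) ≠ 0 := by omega
        have htjj : t.val + 1 - 1 < i - 1 := by have := t.isLt; omega
        have ht := congrFun hr ⟨t.val + 1, htlt⟩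
        rw [Emap_ne hk2 hkm h₁ ⟨t.val + 1, htlt⟩ htne htjj,
            Emap_ne hk2 hkm h₂ ⟨t.val + 1, htlt⟩ htne htjj] at ht
        have e : (⟨t.val + 1 - 1, htjj⟩ : Fin (i - 1)) = t :=
          Fin.ext (show t.val + 1 - 1 = t.val from rfl)
        rwa [e] at ht
    calc σ ^ (i - 1) = (univ : Finset (Fin (i - 1) → Fin σ)).card := by simp
      _ ≤ _ := hE
  have hsum := Finset.card_filter_add_card_filter_not
    (s := (univ : Finset (Fin i → Fin σ)))
    (p := fun g => g ⟨0, h0⟩ = g ⟨k - 1, hk1⟩)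
  have huniv : (univ : Finset (Fin i → Fin σ)).card = σ ^ i := by simp
  calc (univ.filter (fun g : Fin i → Fin σ => ¬ g ⟨0, h0⟩ = g ⟨k - 1, hk1⟩)).card
      = (univ : Finset (Fin i → Fin σ)).card
        - (univ.filter (fun g : Fin i → Fin σ => g ⟨0, h0⟩ = g ⟨k - 1, hk1⟩)).card := by
        rw [← hsum, Nat.add_sub_cancel_left]
    _ ≤ (univ : Finset (Fin i → Fin σ)).card - σ ^ (i - 1) := Nat.sub_le_sub_left hlow _
    _ = σ ^ i - σ ^ (i - 1) := by rw [huniv]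

private lemma card_B2k_step1 (hi : 0 < i) {k : ℕ} (hk2 : 2 ≤ k) (hki : 2 * k ≤ i)
    (h0k : 0 < i - k) (hk1m : k - 1 < i - k) :
    (univ.filter (fun f : Fin i → Fin σ =>
        f ⟨0, hi⟩ ≠ f ⟨i - 1, Nat.sub_lt hi one_pos⟩ ∧ Brd hi f k)).card
      ≤ (univ.filter (fun g : Fin (i - k) → Fin σ =>
          ¬ g ⟨0, h0k⟩ = g ⟨k - 1, hk1m⟩)).card := by
  classical
  have hm : k ≤ i - k := by omega
  apply Finset.card_le_card_of_injOn
    (fun f : Fin i → Fin σ => f ∘ Fin.castLE (by omega : i - k ≤ i))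
  · intro f hf
    simp only [Finset.mem_coe, Finset.mem_filter, Finset.mem_univ, true_and] at hf
    obtain ⟨hne, hb⟩ := hf
    simp only [Finset.mem_coe, Finset.mem_filter, Finset.mem_univ, true_and, Function.comp]
    intro hcontra
    apply hne
    have hB := hb (k - 1) (by omega)
    rw [gf_eq hi f (by omega), gf_eq hi f (show i - k + (k - 1) < i by omega)] at hB
    have e : (⟨i - k + (k - 1), by omega⟩ : Fin i) = ⟨i - 1, Nat.sub_lt hi one_pos⟩ :=
      Fin.ext (show i - k + (k - 1) = i - 1 by omega)
    rw [e] at hB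
    refine Eq.trans ?_ hB
    exact hcontra
  · intro f₁ hf₁ f₂ hf₂ hr
    simp only [Finset.coe_filter, Set.mem_setOf_eq, Finset.mem_univ, true_and] at hf₁ hf₂
    funext j
    by_cases hj : j.val < i - k
    · exact congrFun hr ⟨j.val, hj⟩
    · have hjlt := j.isLt
      have hb₁ := hf₁.2 (j.val - (i - k)) (by omega)
      have hb₂ := hf₂.2 (j.val - (i - k)) (by omega)
      have hjv : i - k + (j.val - (i - k)) = j.val := by omega
      rw [hjv] at hb₁ hb₂
      have hsm : j.val - (i - k) < i - k := by omega
      rw [gf_eq hi f₁ (by omega), gf_eq hi f₁ j.isLt] at hb₁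
      rw [gf_eq hi f₂ (by omega), gf_eq hi f₂ j.isLt] at hb₂
      have hsmall : f₁ (⟨j.val - (i - k), by omega⟩ : Fin i)
          = f₂ (⟨j.val - (i - k), by omega⟩ : Fin i) := congrFun hr ⟨j.val - (i - k), hsm⟩
      have e1 : f₁ (⟨j.val, j.isLt⟩ : Fin i) = f₁ j := rfl
      have e2 : f₂ (⟨j.val, j.isLt⟩ : Fin i) = f₂ j := rfl
      rw [e1] at hb₁; rw [e2] at hb₂
      rw [← hb₁, ← hb₂]
      exact hsmall

private lemma card_B2k (hi : 0 < i) {k : ℕ} (hk2 : 2 ≤ k) (hki : 2 * k ≤ i) :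
    (univ.filter (fun f : Fin i → Fin σ =>
        f ⟨0, hi⟩ ≠ f ⟨i - 1, Nat.sub_lt hi one_pos⟩ ∧ Brd hi f k)).card
      ≤ σ ^ (i - k) - σ ^ (i - k - 1) :=
  (card_B2k_step1 hi hk2 hki (by omega) (by omega)).trans
    (card_ne_le hk2 (by omega) (by omega) (by omega))

private lemma tel (g : ℕ → ℕ) (hg : ∀ a b, a ≤ b → g b ≤ g a) (n : ℕ) :
    ∑ j ∈ Finset.range n, (g j - g (j + 1)) = g 0 - g n := by
  induction n with
  | zero => simp
  | succ n ih =>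
    rw [Finset.sum_range_succ, ih]
    have h1 := hg n (n + 1) (by omega)
    have h2 := hg 0 n (by omega)
    omega

end Aux

theorem unbCount_lower_bound (σ i : ℕ) (hσ : 2 ≤ σ) (hi : 2 ≤ i) :
    (σ : ℝ) ^ i - (σ : ℝ) ^ (i - 1) - (σ : ℝ) ^ (i - 2) ≤ (unbCount σ i : ℝ) := by
  classical
  have hi0 : 0 < i := by omega
  set P : (Fin i → Fin σ) → Prop := fun f => Unbordered (List.ofFn f) with hP
  have hcard : unbCount σ i = (univ.filter P).card := by
    rw [unbCount, Nat.card_eq_fintype_card]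
    exact Fintype.card_subtype _
  have hsplit : (univ.filter P).card + (univ.filter (fun f => ¬ P f)).card = σ ^ i := by
    rw [Finset.card_filter_add_card_filter_not]
    simp
  set K := i / 2 with hK
  set B1 : Finset (Fin i → Fin σ) :=
    univ.filter (fun f => f ⟨0, hi0⟩ = f ⟨i - 1, Nat.sub_lt hi0 one_pos⟩) with hB1
  set B2 : ℕ → Finset (Fin i → Fin σ) := fun k =>
    univ.filter (fun f => f ⟨0, hi0⟩ ≠ f ⟨i - 1, Nat.sub_lt hi0 one_pos⟩ ∧ Brd hi0 f k) with hB2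
  have hcover : univ.filter (fun f => ¬ P f) ⊆ B1 ∪ (Finset.Icc 2 K).biUnion B2 := by
    intro f hf
    simp only [Finset.mem_filter, Finset.mem_univ, true_and] at hf
    by_cases hfe : f ⟨0, hi0⟩ = f ⟨i - 1, Nat.sub_lt hi0 one_pos⟩
    · refine Finset.mem_union_left _ ?_
      rw [hB1, Finset.mem_filter]
      exact ⟨Finset.mem_univ _, hfe⟩
    · obtain ⟨k, hk2, hkK, hb⟩ := exists_min_border hi0 f hf hfe
      refine Finset.mem_union_right _ (Finset.mem_biUnion.2 ⟨k, ?_, ?_⟩)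
      · rw [Finset.mem_Icc]; omega
      · simp only [hB2, Finset.mem_filter, Finset.mem_univ, true_and]
        exact ⟨hfe, hb⟩
  have hsumb : ∑ k ∈ Finset.Icc 2 K, (B2 k).card ≤ σ ^ (i - 2) := by
    have hterm : ∀ k ∈ Finset.Icc 2 K, (B2 k).card ≤ σ ^ (i - k) - σ ^ (i - k - 1) := by
      intro k hk
      rw [Finset.mem_Icc] at hk
      exact card_B2k hi0 hk.1 (by omega)
    calc ∑ k ∈ Finset.Icc 2 K, (B2 k).card
        ≤ ∑ k ∈ Finset.Icc 2 K, (σ ^ (i - k) - σ ^ (i - k - 1)) := Finset.sum_le_sum hterm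
      _ ≤ σ ^ (i - 2) := by
          rcases Nat.lt_or_ge K 2 with hK2 | hK2
          · rw [Finset.Icc_eq_empty (by omega)]
            simp
          · have hrw : ∑ k ∈ Finset.Icc 2 K, (σ ^ (i - k) - σ ^ (i - k - 1))
                = ∑ j ∈ Finset.range (K - 1),
                    ((fun t => σ ^ (i - 2 - t)) j - (fun t => σ ^ (i - 2 - t)) (j + 1)) := by
              rw [show Finset.Icc 2 K = Finset.Ico 2 (K + 1) by rw [Finset.Ico_add_one_right_eq_Icc],
                Finset.sum_Ico_eq_sum_range, show K + 1 - 2 = K - 1 from rfl]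
              apply Finset.sum_congr rfl
              intro j _
              simp only
              rw [show i - (2 + j) - 1 = i - 2 - (j + 1) from by omega,
                  show i - (2 + j) = i - 2 - j from by omega]
            rw [hrw, tel (fun t => σ ^ (i - 2 - t))
              (fun a b hab => Nat.pow_le_pow_right (by omega) (by omega))]
            exact le_trans (Nat.sub_le _ _) (by simp)
  have hbound : (univ.filter (fun f => ¬ P f)).card ≤ σ ^ (i - 1) + σ ^ (i - 2) := by
    calc (univ.filter (fun f => ¬ P f)).card
        ≤ (B1 ∪ (Finset.Icc 2 K).biUnion B2).card := Finset.card_le_card hcover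
      _ ≤ B1.card + ((Finset.Icc 2 K).biUnion B2).card := Finset.card_union_le _ _
      _ ≤ B1.card + ∑ k ∈ Finset.Icc 2 K, (B2 k).card :=
          Nat.add_le_add_left (Finset.card_biUnion_le) _
      _ ≤ σ ^ (i - 1) + σ ^ (i - 2) := Nat.add_le_add (card_B1 hi) hsumb
  -- pass to ℝ
  have h1 : ((univ.filter P).card : ℝ) + ((univ.filter (fun f => ¬ P f)).card : ℝ)
      = (σ : ℝ) ^ i := by
    exact_mod_cast congrArg (Nat.cast : ℕ → ℝ) hsplit
  have h2 : ((univ.filter (fun f => ¬ P f)).card : ℝ)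
      ≤ (σ : ℝ) ^ (i - 1) + (σ : ℝ) ^ (i - 2) := by
    exact_mod_cast Nat.cast_le.2 hbound
  rw [hcard]
  linarith
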